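/- Let γ₁,…,γₙ ∈ ℂ be pairwise distinct, t ∈ ℂ nonzero, and b₁,…,bₙ ∈ ℂ. Let E₂(t) be the n×n matrix whose last row has entries [E₂(t)]_{n,k} = b_k t^{n−1−k} for 1 ≤ k ≤ n and all other entries 0. Then for all 1 ≤ i,j ≤ n, [S₀(t)⁻¹ · E₂(t) · S₀(t)]_{i,j} = (1/t) · [S₀(1)⁻¹]_{i,n} · Σ_{k=1}^{n} b_k γⱼ^{k−1}. -/
import Mathlib


/-- For pairwise distinct `γ₁,…,γₙ ∈ ℂ`, nonzero `t ∈ ℂ` and `b₁,…,bₙ ∈ ℂ`, let `E₂(t)` be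
the matrix whose only nonzero row is the last one, with entries `b_k t^{n−1−k}` (1-indexed,
integer exponents).  Then
`[S₀(t)⁻¹ · E₂(t) · S₀(t)]_{i,j} = (1/t) · [S₀(1)⁻¹]_{i,n} · Σ_{k=1}^{n} b_k γⱼ^{k−1}`. -/
theorem stmt7 (n : ℕ) (hn : 1 ≤ n) (γ : Fin n → ℂ) (hγ : Function.Injective γ)
    (t : ℂ) (ht : t ≠ 0) (b : Fin n → ℂ)
    (S₀ : ℂ → Matrix (Fin n) (Fin n) ℂ)
    (hS₀ : ∀ s : ℂ, ∀ i j : Fin n, S₀ s i j = (γ j * s) ^ (i : ℕ))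
    (E₂ : Matrix (Fin n) (Fin n) ℂ)
    (hE₂ : ∀ i j : Fin n, E₂ i j =
      if (i : ℕ) = n - 1 then b j * t ^ ((n : ℤ) - 2 - (j : ℕ)) else 0) :
    ∀ i j : Fin n, ((S₀ t)⁻¹ * E₂ * S₀ t) i j =
      (1 / t) * ((S₀ 1)⁻¹ i ⟨n - 1, by omega⟩ * ∑ k : Fin n, b k * γ j ^ (k : ℕ)) := by
  set N : Fin n := ⟨n - 1, by omega⟩ with hN
  -- S₀ t = diag (t^i) * S₀ 1
  have hA : S₀ t = Matrix.diagonal (fun i : Fin n => t ^ (i : ℕ)) * S₀ 1 := by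
    ext i j
    rw [Matrix.diagonal_mul, hS₀, hS₀, mul_one, mul_pow]
    ring
  have hdiag : (Matrix.diagonal (fun i : Fin n => t ^ (i : ℕ)))⁻¹ =
      Matrix.diagonal (fun i : Fin n => (t ^ (i : ℕ))⁻¹) := by
    apply Matrix.inv_eq_right_inv
    ext i j
    rw [Matrix.diagonal_mul_diagonal]
    rcases eq_or_ne i j with rfl | h
    · simp [mul_inv_cancel₀ (pow_ne_zero (i:ℕ) ht)]
    · simp [Matrix.diagonal_apply_ne _ h, Matrix.one_apply_ne h]
  have hAinv : (S₀ t)⁻¹ =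
      (S₀ 1)⁻¹ * Matrix.diagonal (fun i : Fin n => (t ^ (i : ℕ))⁻¹) := by
    rw [hA, Matrix.mul_inv_rev, hdiag]
  have hentry : ∀ i : Fin n, (S₀ t)⁻¹ i N = (S₀ 1)⁻¹ i N * (t ^ (n - 1))⁻¹ := by
    intro i
    rw [hAinv, Matrix.mul_diagonal]
  intro i j
  rw [Matrix.mul_apply]
  have hmid : ∀ k : Fin n, ((S₀ t)⁻¹ * E₂) i k =
      (S₀ t)⁻¹ i N * (b k * t ^ ((n : ℤ) - 2 - (k : ℕ))) := by
    intro k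
    rw [Matrix.mul_apply]
    rw [Finset.sum_eq_single N]
    · rw [hE₂]; simp [hN]
    · intro m _ hm
      rw [hE₂]
      have : ¬ ((m : ℕ) = n - 1) := by
        intro h; apply hm; apply Fin.ext; simpa [hN] using h
      simp [this]
    · simp
  simp only [hmid, hentry, hS₀]
  have hrhs : (1 / t) * ((S₀ 1)⁻¹ i N * ∑ k : Fin n, b k * γ j ^ (k : ℕ)) =
      ∑ k : Fin n, (1 / t) * ((S₀ 1)⁻¹ i N * (b k * γ j ^ (k : ℕ))) := by
    rw [Finset.mul_sum, Finset.mul_sum]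
  rw [hrhs]
  refine Finset.sum_congr rfl fun k _ => ?_
  have h1 : (γ j * t) ^ (k : ℕ) = γ j ^ (k : ℕ) * t ^ (k : ℕ) := mul_pow _ _ _
  have h2 : (t ^ (n - 1) : ℂ) = t ^ ((n : ℤ) - 1) := by
    rw [← zpow_natCast]
    congr 1
    omega
  have h3 : (t ^ (k : ℕ) : ℂ) = t ^ ((k : ℕ) : ℤ) := (zpow_natCast t _).symm
  rw [h1, h2, h3]
  rw [show ((S₀ 1)⁻¹ i N * (t ^ ((n:ℤ) - 1))⁻¹ * (b k * t ^ ((n : ℤ) - 2 - (k : ℕ))) *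
      (γ j ^ (k : ℕ) * t ^ ((k : ℕ) : ℤ))) =
      (S₀ 1)⁻¹ i N * (b k * γ j ^ (k : ℕ)) *
        ((t ^ ((n:ℤ) - 1))⁻¹ * (t ^ ((n : ℤ) - 2 - (k : ℕ)) * t ^ ((k : ℕ) : ℤ))) by ring]
  rw [← zpow_add₀ ht]
  rw [show ((n : ℤ) - 2 - (k : ℕ) + (k : ℕ)) = (n : ℤ) - 2 by ring]
  rw [← zpow_neg, ← zpow_add₀ ht]
  rw [show (-((n:ℤ) - 1) + ((n:ℤ) - 2)) = (-1 : ℤ) by ring]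
  rw [zpow_neg_one, ← one_div]
  ring
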